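/- For every star expression e over an action set A, the entry/body-labeling Ĉ1(e) (the e-generated, e-rooted part of the entry/body-labeled 1-LTS generated by the marked TSS T̲̂^(*)(A)) is a LLEE-witness of the 1-chart interpretation C1(e). -/

import Mathlib

universe u v w

/-- Star expressions over a set `A` of actions. -/
inductive StExp (A : Type u) : Type u
  | zero : StExp A
  | one : StExp A
  | act : A → StExp A
  | add : StExp A → StExp A → StExp A
  | mul : StExp A → StExp A → StExp A
  | star : StExp A → StExp A

namespace StExp

variable {A : Type u}

/-- Immediate termination in Milner's TSS `T(A)`. -/
inductive Term : StExp A → Prop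
  | one : Term StExp.one
  | addL {e₁ e₂ : StExp A} : Term e₁ → Term (StExp.add e₁ e₂)
  | addR {e₁ e₂ : StExp A} : Term e₂ → Term (StExp.add e₁ e₂)
  | mul {e₁ e₂ : StExp A} : Term e₁ → Term e₂ → Term (StExp.mul e₁ e₂)
  | star {e : StExp A} : Term (StExp.star e)

/-- Transitions in Milner's TSS `T(A)`. -/
inductive Step : StExp A → A → StExp A → Prop
  | act {a : A} : Step (StExp.act a) a StExp.one
  | addL {e₁ e₂ e' : StExp A} {a : A} : Step e₁ a e' → Step (StExp.add e₁ e₂) a e'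
  | addR {e₁ e₂ e' : StExp A} {a : A} : Step e₂ a e' → Step (StExp.add e₁ e₂) a e'
  | mulL {e₁ e₂ e₁' : StExp A} {a : A} :
      Step e₁ a e₁' → Step (StExp.mul e₁ e₂) a (StExp.mul e₁' e₂)
  | mulR {e₁ e₂ e₂' : StExp A} {a : A} :
      Term e₁ → Step e₂ a e₂' → Step (StExp.mul e₁ e₂) a e₂'
  | star {e e' : StExp A} {a : A} :
      Step e a e' → Step (StExp.star e) a (StExp.mul e' (StExp.star e))

/-- (Syntactic) star height. -/
def height : StExp A → ℕ
  | .zero => 0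
  | .one => 0
  | .act _ => 0
  | .add e₁ e₂ => max e₁.height e₂.height
  | .mul e₁ e₂ => max e₁.height e₂.height
  | .star e => e.height + 1

end StExp

/-- Stacked star expressions: `E ::= e | E·e | E * e*`. -/
inductive SExp (A : Type u) : Type u
  | up : StExp A → SExp A
  | pr : SExp A → StExp A → SExp A
  | st : SExp A → StExp A → SExp A

namespace SExp

variable {A : Type u}

/-- Projection to star expressions, interpreting `*` as `·`. -/
def proj : SExp A → StExp A
  | .up e => e
  | .pr E e => StExp.mul E.proj e
  | .st E e => StExp.mul E.proj (StExp.star e)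

/-- `E` is a star expression (contains no stacked product `*`). -/
def IsStExp : SExp A → Prop
  | .up _ => True
  | .pr E _ => IsStExp E
  | .st _ _ => False

/-- Star expressions that are not products (canonical arguments of `up`). -/
def UpOk : StExp A → Prop
  | .mul _ _ => False
  | _ => True

/-- Canonical stacked star expressions: products of star expressions are
represented by `pr` rather than by `up` applied to `StExp.mul`. -/
def Canonical : SExp A → Prop
  | .up e => UpOk e
  | .pr E _ => Canonical E
  | .st E _ => Canonical E

/-- Canonical embedding of star expressions into stacked star expressions. -/
def flatUp : StExp A → SExp A
  | .mul e₁ e₂ => SExp.pr (flatUp e₁) e₂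
  | e => SExp.up e

/-- Immediate termination for stacked star expressions (TSS `T̲^(*)(A)`). -/
inductive STerm : SExp A → Prop
  | up {e : StExp A} : StExp.Term e → STerm (SExp.up e)
  | pr {E : SExp A} {e : StExp A} : STerm E → StExp.Term e → STerm (SExp.pr E e)

/-- Transitions of the TSS `T̲^(*)(A)`; labels in `Option A`, where `none`
is the empty-step label `1`. -/
inductive SStep : SExp A → Option A → SExp A → Prop
  | act {a : A} : SStep (SExp.up (StExp.act a)) (some a) (SExp.up StExp.one)
  | addL {e₁ e₂ : StExp A} {a : A} {E' : SExp A} :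
      SStep (SExp.up e₁) (some a) E' → SStep (SExp.up (StExp.add e₁ e₂)) (some a) E'
  | addR {e₁ e₂ : StExp A} {a : A} {E' : SExp A} :
      SStep (SExp.up e₂) (some a) E' → SStep (SExp.up (StExp.add e₁ e₂)) (some a) E'
  | upMulL {e₁ e₂ : StExp A} {l : Option A} {E₁' : SExp A} :
      SStep (SExp.up e₁) l E₁' → SStep (SExp.up (StExp.mul e₁ e₂)) l (SExp.pr E₁' e₂)
  | upMulR {e₁ e₂ : StExp A} {a : A} {E₂' : SExp A} :
      StExp.Term e₁ → SStep (SExp.up e₂) (some a) E₂' →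
      SStep (SExp.up (StExp.mul e₁ e₂)) (some a) E₂'
  | upStar {e : StExp A} {a : A} {E' : SExp A} :
      SStep (SExp.up e) (some a) E' →
      SStep (SExp.up (StExp.star e)) (some a) (SExp.st E' e)
  | prL {E₁ E₁' : SExp A} {e₂ : StExp A} {l : Option A} :
      SStep E₁ l E₁' → SStep (SExp.pr E₁ e₂) l (SExp.pr E₁' e₂)
  | prR {E₁ E₂' : SExp A} {e₂ : StExp A} {a : A} :
      STerm E₁ → SStep (SExp.up e₂) (some a) E₂' → SStep (SExp.pr E₁ e₂) (some a) E₂'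
  | stL {E₁ E₁' : SExp A} {e₂ : StExp A} {l : Option A} :
      SStep E₁ l E₁' → SStep (SExp.st E₁ e₂) l (SExp.st E₁' e₂)
  | stOne {E₁ : SExp A} {e₂ : StExp A} :
      STerm E₁ → SStep (SExp.st E₁ e₂) none (SExp.up (StExp.star e₂))

/-- `1`-transition. -/
def OneStep (E F : SExp A) : Prop := SStep E none F

/-- Transition with an arbitrary label in `A ∪ {1}`. -/
def AStep (E F : SExp A) : Prop := ∃ l, SStep E l F

/-- Induced (proper) transition `E ⇒a E'`: a sequence of `1`-transitions
followed by an `a`-transition. -/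
def IStep (E : SExp A) (a : A) (E' : SExp A) : Prop :=
  ∃ F, Relation.ReflTransGen OneStep E F ∧ SStep F (some a) E'

/-- Induced termination `E ↓(1)`: a sequence of `1`-transitions ending in a
terminating expression. -/
def ITerm (E : SExp A) : Prop :=
  ∃ F, Relation.ReflTransGen OneStep E F ∧ STerm F

/-- `E` is normed: a path to an expression with immediate termination. -/
def Normed (E : SExp A) : Prop :=
  ∃ F, Relation.ReflTransGen AStep E F ∧ STerm F

/-- `E` is normed⁺: a nonempty sequence of induced transitions to an
expression with induced termination. -/
def NormedP (E : SExp A) : Prop :=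
  ∃ F, Relation.TransGen (fun X Y => ∃ a : A, IStep X a Y) E F ∧ ITerm F

/-- Induced termination as derived in the extension `T̲ind^(*)(A)`. -/
inductive IndTerm : SExp A → Prop
  | base {E : SExp A} : STerm E → IndTerm E
  | step {E F : SExp A} : SStep E none F → IndTerm F → IndTerm E

/-- Induced transitions as derived in the extension `T̲ind^(*)(A)`. -/
inductive IndStep : SExp A → A → SExp A → Prop
  | base {E E' : SExp A} {a : A} : SStep E (some a) E' → IndStep E a E'
  | step {E F E' : SExp A} {a : A} : SStep E none F → IndStep F a E' → IndStep E a E'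

/-- Marked transitions of the TSS `T̲̂^(*)(A)`: marking label `0` means a body
(`bo`) transition, `n ≥ 1` a loop-entry transition of level `n`. -/
inductive MStep : SExp A → Option A × ℕ → SExp A → Prop
  | act {a : A} : MStep (SExp.up (StExp.act a)) (some a, 0) (SExp.up StExp.one)
  | addL {e₁ e₂ : StExp A} {a : A} {n : ℕ} {E' : SExp A} :
      MStep (SExp.up e₁) (some a, n) E' → MStep (SExp.up (StExp.add e₁ e₂)) (some a, 0) E'
  | addR {e₁ e₂ : StExp A} {a : A} {n : ℕ} {E' : SExp A} :
      MStep (SExp.up e₂) (some a, n) E' → MStep (SExp.up (StExp.add e₁ e₂)) (some a, 0) E'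
  | upMulL {e₁ e₂ : StExp A} {l : Option A × ℕ} {E₁' : SExp A} :
      MStep (SExp.up e₁) l E₁' → MStep (SExp.up (StExp.mul e₁ e₂)) l (SExp.pr E₁' e₂)
  | upMulR {e₁ e₂ : StExp A} {a : A} {n : ℕ} {E₂' : SExp A} :
      StExp.Term e₁ → MStep (SExp.up e₂) (some a, n) E₂' →
      MStep (SExp.up (StExp.mul e₁ e₂)) (some a, 0) E₂'
  | upStarP {e : StExp A} {a : A} {n : ℕ} {E' : SExp A} :
      NormedP (SExp.up e) → MStep (SExp.up e) (some a, n) E' →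
      MStep (SExp.up (StExp.star e)) (some a, e.height + 1) (SExp.st E' e)
  | upStarN {e : StExp A} {a : A} {n : ℕ} {E' : SExp A} :
      ¬ NormedP (SExp.up e) → MStep (SExp.up e) (some a, n) E' →
      MStep (SExp.up (StExp.star e)) (some a, 0) (SExp.st E' e)
  | prL {E₁ E₁' : SExp A} {e₂ : StExp A} {l : Option A × ℕ} :
      MStep E₁ l E₁' → MStep (SExp.pr E₁ e₂) l (SExp.pr E₁' e₂)
  | prR {E₁ E₂' : SExp A} {e₂ : StExp A} {a : A} {n : ℕ} :
      STerm E₁ → MStep (SExp.up e₂) (some a, n) E₂' →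
      MStep (SExp.pr E₁ e₂) (some a, 0) E₂'
  | stL {E₁ E₁' : SExp A} {e₂ : StExp A} {l : Option A × ℕ} :
      MStep E₁ l E₁' → MStep (SExp.st E₁ e₂) l (SExp.st E₁' e₂)
  | stOne {E₁ : SExp A} {e₂ : StExp A} :
      STerm E₁ → MStep (SExp.st E₁ e₂) (none, 0) (SExp.up (StExp.star e₂))

/-- Body transition `→bo`. -/
def BStep (E F : SExp A) : Prop := ∃ l : Option A, MStep E (l, 0) F

/-- Star height of stacked star expressions. -/
def heightS : SExp A → ℕ
  | .up e => e.height
  | .pr E e => max E.heightS e.height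
  | .st E e => max E.heightS (e.height + 1)

end SExp

/-- Applicative contexts of stacked star expressions. -/
inductive AppCtx (A : Type u) : Type u
  | hole : AppCtx A
  | pr : AppCtx A → StExp A → AppCtx A
  | st : AppCtx A → StExp A → AppCtx A

/-- Filling the hole of an applicative context. -/
def AppCtx.fill {A : Type u} : AppCtx A → SExp A → SExp A
  | .hole, E => E
  | .pr C e, E => SExp.pr (C.fill E) e
  | .st C e, E => SExp.st (C.fill E) e

/-- A labeled transition system with termination. -/
structure LTS (S : Type u) (L : Type v) where
  step : S → L → S → Prop
  term : S → Prop

/-- Bisimulation between two LTSs with termination. -/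
def IsBisimulation {S₁ : Type u} {S₂ : Type v} {L : Type w}
    (M₁ : LTS S₁ L) (M₂ : LTS S₂ L) (B : S₁ → S₂ → Prop) : Prop :=
  (∃ s₁ s₂, B s₁ s₂) ∧
  ∀ s₁ s₂, B s₁ s₂ →
    ((∀ a s₁', M₁.step s₁ a s₁' → ∃ s₂', M₂.step s₂ a s₂' ∧ B s₁' s₂') ∧
     (∀ a s₂', M₂.step s₂ a s₂' → ∃ s₁', M₁.step s₁ a s₁' ∧ B s₁' s₂') ∧
     (M₁.term s₁ ↔ M₂.term s₂))

/-- The star expressions LTS `L(StExp(A))`. -/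
def stexpLTS (A : Type u) : LTS (StExp A) A := ⟨StExp.Step, StExp.Term⟩

/-- The induced LTS of the stacked star expressions 1-LTS `L1(StExp^(*)(A))`. -/
def indSExpLTS (A : Type u) : LTS (SExp A) A := ⟨SExp.IStep, SExp.ITerm⟩

/-- A (rooted) chart. -/
structure Chart (V : Type u) (L : Type v) where
  verts : Set V
  start : V
  step : V → L → V → Prop
  term : V → Prop

/-- Bisimulation between two charts: a bisimulation between the underlying
LTSs that relates the start vertices. -/
def IsChartBisim {V₁ : Type u} {V₂ : Type v} {L : Type w}
    (C₁ : Chart V₁ L) (C₂ : Chart V₂ L) (B : V₁ → V₂ → Prop) : Prop :=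
  (∀ x y, B x y → x ∈ C₁.verts ∧ y ∈ C₂.verts) ∧
  B C₁.start C₂.start ∧
  ∀ x y, B x y →
    ((∀ a x', C₁.step x a x' → ∃ y', C₂.step y a y' ∧ B x' y') ∧
     (∀ a y', C₂.step y a y' → ∃ x', C₁.step x a x' ∧ B x' y') ∧
     (C₁.term x ↔ C₂.term y))

def ChartBisimilar {V₁ : Type u} {V₂ : Type v} {L : Type w}
    (C₁ : Chart V₁ L) (C₂ : Chart V₂ L) : Prop :=
  ∃ B, IsChartBisim C₁ C₂ B

/-- Star expressions reachable from `e` in Milner's LTS. -/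
def MReach {A : Type u} (e : StExp A) : Set (StExp A) :=
  {f | Relation.ReflTransGen (fun x y => ∃ a, StExp.Step x a y) e f}

/-- The chart interpretation `C(e)` of a star expression. -/
def chartInt {A : Type u} (e : StExp A) : Chart (StExp A) A where
  verts := MReach e
  start := e
  step x a y := x ∈ MReach e ∧ StExp.Step x a y
  term x := x ∈ MReach e ∧ StExp.Term x

/-- Stacked star expressions reachable from (the canonical representation of)
`e` in the 1-LTS. -/
def SReach {A : Type u} (e : StExp A) : Set (SExp A) :=
  {F | Relation.ReflTransGen SExp.AStep (SExp.flatUp e) F}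

/-- The 1-chart interpretation `C1(e)` of a star expression. -/
def oneChartInt {A : Type u} (e : StExp A) : Chart (SExp A) (Option A) where
  verts := SReach e
  start := SExp.flatUp e
  step x l y := x ∈ SReach e ∧ SExp.SStep x l y
  term x := x ∈ SReach e ∧ SExp.STerm x

/-- The entry/body-labeled 1-chart interpretation `Ĉ1(e)`. -/
def markedOneChartInt {A : Type u} (e : StExp A) : Chart (SExp A) (Option A × ℕ) where
  verts := SReach e
  start := SExp.flatUp e
  step x l y := x ∈ SReach e ∧ SExp.MStep x l y
  term x := x ∈ SReach e ∧ SExp.STerm x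

/-- The induced chart of a 1-chart: induced transitions and induced
termination. -/
def indChart {V : Type u} {A : Type v} (C : Chart V (Option A)) : Chart V A where
  verts := C.verts
  start := C.start
  step x a y := ∃ u, Relation.ReflTransGen (fun s t => C.step s none t) x u ∧ C.step u (some a) y
  term x := ∃ u, Relation.ReflTransGen (fun s t => C.step s none t) x u ∧ C.term u

/-- An infinite path from the start vertex of a chart. -/
def IsInfPathFrom {V : Type u} {L : Type v} (C : Chart V L) (p : ℕ → V) : Prop :=
  p 0 = C.start ∧ ∀ i, ∃ l, C.step (p i) l (p (i + 1))

/-- Loop chart: (L1) an infinite path from the start vertex exists, (L2) every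
infinite path from the start vertex returns to it after a positive number of
transitions, (L3) only the start vertex may terminate. -/
def IsLoopChart {V : Type u} {L : Type v} (C : Chart V L) : Prop :=
  (∃ p, IsInfPathFrom C p) ∧
  (∀ p, IsInfPathFrom C p → ∃ k, 0 < k ∧ p k = C.start) ∧
  (∀ w ∈ C.verts, C.term w → w = C.start)

namespace LLEE

variable {S : Type u} {L : Type v}

/-- Body transition of an entry/body-labeling. -/
def Body (step : S → L × ℕ → S → Prop) (x y : S) : Prop := ∃ l, step x (l, 0) y

/-- Entry transition of level `n` of an entry/body-labeling. -/
def Entry (step : S → L × ℕ → S → Prop) (n : ℕ) (x y : S) : Prop := ∃ l, step x (l, n) y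

/-- Vertices of the induced subchart at `(v, n)`: on paths that start with an
`→[n]` transition from `v`, continue with body transitions, and halt upon
revisiting `v`. -/
def loopVerts (step : S → L × ℕ → S → Prop) (v : S) (n : ℕ) : Set S :=
  insert v {w | ∃ u, Entry step n v u ∧
    Relation.ReflTransGen (fun x y => Body step x y ∧ x ≠ v) u w}

/-- The induced subchart at `(v, n)`. -/
def subchartAt (step : S → L × ℕ → S → Prop) (term : S → Prop) (v : S) (n : ℕ) :
    Chart S (L × ℕ) where
  verts := loopVerts step v n
  start := v
  step x l y :=
    (x = v ∧ l.2 = n ∧ step x l y) ∨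
    (x ∈ loopVerts step v n ∧ x ≠ v ∧ l.2 = 0 ∧ step x l y)
  term x := x ∈ loopVerts step v n ∧ term x

/-- LLEE-witness conditions (W1)–(W3) for an entry/body-labeled transition
system with transitions `step` and termination `term`. -/
def IsWitness (step : S → L × ℕ → S → Prop) (term : S → Prop) : Prop :=
  (¬ ∃ p : ℕ → S, ∀ i, Body step (p i) (p (i + 1))) ∧
  (∀ v n, 0 < n → (∃ w, Entry step n v w) → IsLoopChart (subchartAt step term v n)) ∧
  (∀ v n, 0 < n → (∃ w, Entry step n v w) →
    ∀ t, t ∈ loopVerts step v n → t ≠ v → ∀ m t', 0 < m → Entry step m t t' → m < n)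

end LLEE

namespace LEE

variable {V : Type u} {L : Type v}

/-- Vertices of the subchart generated from `v` by a set `U` of transitions
from `v`: paths start with a transition in `U` and continue (with arbitrary
transitions) until `v` is reached again. -/
def genVerts (C : Chart V L) (v : V) (U : Set (V × L × V)) : Set V :=
  insert v {w | ∃ u, (∃ l, (v, l, u) ∈ U) ∧
    Relation.ReflTransGen (fun x y => (∃ l, C.step x l y) ∧ x ≠ v) u w}

/-- The subchart generated from `v` by the transitions in `U`. -/
def genSubchart (C : Chart V L) (v : V) (U : Set (V × L × V)) : Chart V L where
  verts := genVerts C v U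
  start := v
  step x l y :=
    (x = v ∧ (v, l, y) ∈ U) ∨
    (x ∈ genVerts C v U ∧ x ≠ v ∧ C.step x l y)
  term x := x ∈ genVerts C v U ∧ C.term x

/-- `U` determines a loop subchart of `C` rooted at `v`. -/
def IsLoopSubchart (C : Chart V L) (v : V) (U : Set (V × L × V)) : Prop :=
  v ∈ C.verts ∧ U.Nonempty ∧
  (∀ t ∈ U, t.1 = v ∧ C.step t.1 t.2.1 t.2.2) ∧
  IsLoopChart (genSubchart C v U)

/-- Elimination of the loop-entry transitions in `U`, followed by removal of
all vertices and transitions that become unreachable. -/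
def elim (C : Chart V L) (U : Set (V × L × V)) : Chart V L :=
  let step' : V → L → V → Prop := fun x l y => C.step x l y ∧ (x, l, y) ∉ U
  let R : Set V := {w | Relation.ReflTransGen (fun x y => ∃ l, step' x l y) C.start w}
  { verts := C.verts ∩ R
    start := C.start
    step := fun x l y => step' x l y ∧ x ∈ R ∧ y ∈ R
    term := fun x => C.term x ∧ x ∈ R }

/-- One step of the loop elimination procedure. -/
def ElimStep (C C' : Chart V L) : Prop :=
  ∃ v U, IsLoopSubchart C v U ∧ C' = elim C U

/-- The chart has an infinite path. -/
def HasInfPath (C : Chart V L) : Prop :=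
  ∃ p : ℕ → V, p 0 ∈ C.verts ∧ ∀ i, ∃ l, C.step (p i) l (p (i + 1))

/-- The loop existence and elimination property LEE: repeated elimination of
loop subcharts results in a chart without an infinite path. -/
def SatisfiesLEE (C : Chart V L) : Prop :=
  ∃ C', Relation.ReflTransGen ElimStep C C' ∧ ¬ HasInfPath C'

end LEE

/-- A maximal path of body transitions from `X` in the entry/body-labeled
1-LTS: finite (of length `len`) or infinite (`len = ⊤`), and if finite then
not extensible by any further body transition. -/
structure BoPath (A : Type u) (X : SExp A) where
  len : ℕ∞
  f : ℕ → SExp A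
  head : f 0 = X
  steps : ∀ i : ℕ, (i : ℕ∞) < len → SExp.BStep (f i) (f (i + 1))
  maximal : ∀ n : ℕ, len = (n : ℕ∞) → ∀ Y, ¬ SExp.BStep (f n) Y

/-- Canonical stacked star expressions (the states of the stacked star
expressions 1-LTS `L1(StExp^(*)(A))`). -/
def CSExp (A : Type u) : Type u := {E : SExp A // SExp.Canonical E}

namespace LLEEAux

open SExp Relation

variable {A : Type u}

/-- raw body MStep -/
def Bo (X Y : SExp A) : Prop := ∃ l : Option A, SExp.MStep X (l, 0) Y

theorem msound : ∀ {E : SExp A} {l : Option A × ℕ} {E'}, MStep E l E' → SStep E l.1 E' := by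
  intro E l E' h
  induction h with
  | act => exact .act
  | addL _ ih => exact .addL ih
  | addR _ ih => exact .addR ih
  | upMulL _ ih => exact .upMulL ih
  | upMulR ht _ ih => exact .upMulR ht ih
  | upStarP _ _ ih => exact .upStar ih
  | upStarN _ _ ih => exact .upStar ih
  | prL _ ih => exact .prL ih
  | prR ht _ ih => exact .prR ht ih
  | stL _ ih => exact .stL ih
  | stOne ht => exact .stOne ht

theorem mcomplete : ∀ {E : SExp A} {l : Option A} {E'}, SStep E l E' →
    ∃ n, MStep E (l, n) E' := by
  intro E l E' h
  induction h with
  | act => exact ⟨0, .act⟩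
  | addL _ ih => obtain ⟨n, hn⟩ := ih; exact ⟨0, .addL hn⟩
  | addR _ ih => obtain ⟨n, hn⟩ := ih; exact ⟨0, .addR hn⟩
  | upMulL _ ih => obtain ⟨n, hn⟩ := ih; exact ⟨n, .upMulL hn⟩
  | upMulR ht _ ih => obtain ⟨n, hn⟩ := ih; exact ⟨0, .upMulR ht hn⟩
  | @upStar e a E' _ ih =>
      obtain ⟨n, hn⟩ := ih
      by_cases hN : NormedP (SExp.up e)
      · exact ⟨e.height + 1, .upStarP hN hn⟩
      · exact ⟨0, .upStarN hN hn⟩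
  | prL _ ih => obtain ⟨n, hn⟩ := ih; exact ⟨n, .prL hn⟩
  | prR ht _ ih => obtain ⟨n, hn⟩ := ih; exact ⟨0, .prR ht hn⟩
  | stL _ ih => obtain ⟨n, hn⟩ := ih; exact ⟨n, .stL hn⟩
  | stOne ht => exact ⟨0, .stOne ht⟩

/-- `up f` has no `none`-labelled transitions. -/
theorem no_none_up : ∀ {E : SExp A} {l : Option A} {E'}, SStep E l E' →
    (∃ f, E = SExp.up f) → l ≠ none := by
  intro E l E' h
  induction h with
  | act => intro _ hl; cases hl
  | addL _ ih => intro _ hl; cases hl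
  | addR _ ih => intro _ hl; cases hl
  | upMulL _ ih => intro _ hl; exact ih ⟨_, rfl⟩ hl
  | upMulR _ _ _ => intro _ hl; cases hl
  | upStar _ _ => intro _ hl; cases hl
  | prL _ _ => rintro ⟨f, hf⟩; cases hf
  | prR _ _ _ => intro _ hl; cases hl
  | stL _ _ => rintro ⟨f, hf⟩; cases hf
  | stOne _ => rintro ⟨f, hf⟩; cases hf

/-- Targets of transitions from `up f` are canonical. -/
theorem canonical_target_up : ∀ {E : SExp A} {l : Option A} {E'}, SStep E l E' →
    (∃ f, E = SExp.up f) → Canonical E' := by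
  intro E l E' h
  induction h with
  | act => intro _; trivial
  | addL _ ih => intro _; exact ih ⟨_, rfl⟩
  | addR _ ih => intro _; exact ih ⟨_, rfl⟩
  | upMulL _ ih => intro _; exact ih ⟨_, rfl⟩
  | upMulR _ _ ih => intro _; exact ih ⟨_, rfl⟩
  | upStar _ ih => intro _; exact ih ⟨_, rfl⟩
  | prL _ _ => rintro ⟨f, hf⟩; cases hf
  | prR _ _ _ => rintro ⟨f, hf⟩; cases hf
  | stL _ _ => rintro ⟨f, hf⟩; cases hf
  | stOne _ => rintro ⟨f, hf⟩; cases hf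

theorem canonical_step : ∀ {E : SExp A} {l : Option A} {E'}, SStep E l E' →
    Canonical E → Canonical E' := by
  intro E l E' h
  induction h with
  | act => intro _; trivial
  | addL h ih => intro _; exact canonical_target_up h ⟨_, rfl⟩
  | addR h ih => intro _; exact canonical_target_up h ⟨_, rfl⟩
  | upMulL h ih => intro hc; exact absurd hc id
  | upMulR _ h ih => intro hc; exact absurd hc id
  | @upStar e a E' h ih =>
      intro _
      show Canonical E'
      exact canonical_target_up h ⟨_, rfl⟩
  | prL _ ih => intro hc; exact ih hc
  | prR _ h _ => intro _; exact canonical_target_up h ⟨_, rfl⟩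
  | stL _ ih => intro hc; exact ih hc
  | stOne _ => intro _; trivial

theorem canonical_flatUp : ∀ f : StExp A, Canonical (SExp.flatUp f)
  | .zero => trivial
  | .one => trivial
  | .act _ => trivial
  | .add _ _ => trivial
  | .mul f₁ _ => canonical_flatUp f₁
  | .star _ => trivial

/-- `flatUp f` and `up f` have the same termination and the same transitions. -/
theorem flat_term : ∀ f : StExp A, STerm (SExp.flatUp f) ↔ StExp.Term f := by
  intro f
  induction f with
  | mul f₁ f₂ ih₁ ih₂ =>
    show STerm (SExp.pr (SExp.flatUp f₁) f₂) ↔ _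
    constructor
    · rintro (_ | ⟨h1, h2⟩)
      · exact StExp.Term.mul (ih₁.1 (by assumption)) (by assumption)
    · rintro (_ | _ | _ | ⟨h1, h2⟩)
      · exact STerm.pr (ih₁.2 h1) h2
  | zero => exact Iff.rfl.trans ⟨fun h => by cases h with | up h => exact h, fun h => .up h⟩
  | one => exact ⟨fun h => by cases h with | up h => exact h, fun h => .up h⟩
  | act a => exact ⟨fun h => by cases h with | up h => exact h, fun h => .up h⟩
  | add f₁ f₂ _ _ => exact ⟨fun h => by cases h with | up h => exact h, fun h => .up h⟩
  | star f _ => exact ⟨fun h => by cases h with | up h => exact h, fun h => .up h⟩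

theorem flat_step : ∀ (f : StExp A) (l : Option A) (E' : SExp A),
    SStep (SExp.flatUp f) l E' ↔ SStep (SExp.up f) l E' := by
  intro f
  induction f with
  | mul f₁ f₂ ih₁ ih₂ =>
    intro l E'
    show SStep (SExp.pr (SExp.flatUp f₁) f₂) l E' ↔ _
    constructor
    · intro h
      cases h with
      | prL h => exact .upMulL ((ih₁ _ _).1 h)
      | prR ht h => exact .upMulR ((flat_term f₁).1 ht) h
    · intro h
      cases h with
      | upMulL h => exact .prL ((ih₁ _ _).2 h)
      | upMulR ht h => exact .prR ((flat_term f₁).2 ht) h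
  | zero => intro l E'; exact Iff.rfl
  | one => intro l E'; exact Iff.rfl
  | act a => intro l E'; exact Iff.rfl
  | add f₁ f₂ _ _ => intro l E'; exact Iff.rfl
  | star f _ => intro l E'; exact Iff.rfl

end LLEEAux
namespace LLEEAux

variable {A : Type u}

abbrev Reach (E F : SExp A) : Prop := Relation.ReflTransGen SExp.AStep E F

theorem reach_sub {S : Set (SExp A)} {E : SExp A} (hE : E ∈ S)
    (hcl : ∀ x ∈ S, ∀ y, SExp.AStep x y → y ∈ S) :
    ∀ F, Reach E F → F ∈ S := by
  intro F h
  induction h with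
  | refl => exact hE
  | tail _ hstep ih => exact hcl _ ih _ hstep

theorem reach_up_zero : ∀ F, Reach (SExp.up (StExp.zero : StExp A)) F →
    F = SExp.up StExp.zero := by
  have := @reach_sub A {SExp.up (StExp.zero : StExp A)} _ rfl
    (by rintro x rfl y ⟨l, h⟩; cases h)
  exact this

theorem reach_up_one : ∀ F, Reach (SExp.up (StExp.one : StExp A)) F →
    F = SExp.up StExp.one := by
  have := @reach_sub A {SExp.up (StExp.one : StExp A)} _ rfl
    (by rintro x rfl y ⟨l, h⟩; cases h)
  exact this

theorem reach_up_act {a : A} : ∀ F, Reach (SExp.up (StExp.act a)) F →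
    F = SExp.up (StExp.act a) ∨ F = SExp.up StExp.one := by
  have := @reach_sub A {F | F = SExp.up (StExp.act a) ∨ F = SExp.up StExp.one}
    (SExp.up (StExp.act a)) (Or.inl rfl) ?_
  · exact this
  · rintro x (rfl | rfl) y ⟨l, h⟩
    · cases h; exact Or.inr rfl
    · cases h

theorem reach_up_add {f₁ f₂ : StExp A} : ∀ F, Reach (SExp.up (StExp.add f₁ f₂)) F →
    F = SExp.up (StExp.add f₁ f₂) ∨ Reach (SExp.up f₁) F ∨ Reach (SExp.up f₂) F := by
  have := @reach_sub A
    {F | F = SExp.up (StExp.add f₁ f₂) ∨ Reach (SExp.up f₁) F ∨ Reach (SExp.up f₂) F}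
    (SExp.up (StExp.add f₁ f₂)) (Or.inl rfl) ?_
  · exact this
  · rintro x (rfl | hx | hx) y ⟨l, h⟩
    · cases h with
      | addL h => exact Or.inr (Or.inl (Relation.ReflTransGen.single ⟨_, h⟩))
      | addR h => exact Or.inr (Or.inr (Relation.ReflTransGen.single ⟨_, h⟩))
    · exact Or.inr (Or.inl (hx.tail ⟨l, h⟩))
    · exact Or.inr (Or.inr (hx.tail ⟨l, h⟩))

theorem reach_pr {G : SExp A} {g : StExp A} : ∀ F, Reach (SExp.pr G g) F →
    (∃ G', Reach G G' ∧ F = SExp.pr G' g) ∨ Reach (SExp.up g) F := by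
  have := @reach_sub A
    {F | (∃ G', Reach G G' ∧ F = SExp.pr G' g) ∨ Reach (SExp.up g) F}
    (SExp.pr G g) (Or.inl ⟨G, .refl, rfl⟩) ?_
  · exact this
  · rintro x (⟨G', hG', rfl⟩ | hx) y ⟨l, h⟩
    · cases h with
      | prL h => exact Or.inl ⟨_, hG'.tail ⟨_, h⟩, rfl⟩
      | prR ht h => exact Or.inr (Relation.ReflTransGen.single ⟨_, h⟩)
    · exact Or.inr (hx.tail ⟨l, h⟩)

theorem reach_up_mul {f₁ f₂ : StExp A} : ∀ F, Reach (SExp.up (StExp.mul f₁ f₂)) F →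
    F = SExp.up (StExp.mul f₁ f₂) ∨ (∃ G, Reach (SExp.up f₁) G ∧ F = SExp.pr G f₂) ∨
      Reach (SExp.up f₂) F := by
  have := @reach_sub A
    {F | F = SExp.up (StExp.mul f₁ f₂) ∨ (∃ G, Reach (SExp.up f₁) G ∧ F = SExp.pr G f₂) ∨
      Reach (SExp.up f₂) F}
    (SExp.up (StExp.mul f₁ f₂)) (Or.inl rfl) ?_
  · exact this
  · rintro x (rfl | ⟨G, hG, rfl⟩ | hx) y ⟨l, h⟩
    · cases h with
      | upMulL h => exact Or.inr (Or.inl ⟨_, Relation.ReflTransGen.single ⟨_, h⟩, rfl⟩)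
      | upMulR ht h => exact Or.inr (Or.inr (Relation.ReflTransGen.single ⟨_, h⟩))
    · cases h with
      | prL h => exact Or.inr (Or.inl ⟨_, hG.tail ⟨_, h⟩, rfl⟩)
      | prR ht h => exact Or.inr (Or.inr (Relation.ReflTransGen.single ⟨_, h⟩))
    · exact Or.inr (Or.inr (hx.tail ⟨l, h⟩))

theorem reach_up_star {f₀ : StExp A} : ∀ F, Reach (SExp.up (StExp.star f₀)) F →
    F = SExp.up (StExp.star f₀) ∨ ∃ G, Reach (SExp.up f₀) G ∧ F = SExp.st G f₀ := by
  have := @reach_sub A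
    {F | F = SExp.up (StExp.star f₀) ∨ ∃ G, Reach (SExp.up f₀) G ∧ F = SExp.st G f₀}
    (SExp.up (StExp.star f₀)) (Or.inl rfl) ?_
  · exact this
  · rintro x (rfl | ⟨G, hG, rfl⟩) y ⟨l, h⟩
    · cases h with
      | upStar h => exact Or.inr ⟨_, Relation.ReflTransGen.single ⟨_, h⟩, rfl⟩
    · cases h with
      | stL h => exact Or.inr ⟨_, hG.tail ⟨_, h⟩, rfl⟩
      | stOne ht => exact Or.inl rfl

/-- Upper bound for entry levels. -/
def maxLev : SExp A → ℕ
  | .up f => f.height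
  | .pr E _ => maxLev E
  | .st E _ => maxLev E

theorem entry_le_maxLev : ∀ {E : SExp A} {l : Option A × ℕ} {E'}, SExp.MStep E l E' →
    0 < l.2 → l.2 ≤ maxLev E := by
  intro E l E' h
  induction h with
  | act => intro h0; omega
  | addL _ _ => intro h0; simp at h0
  | addR _ _ => intro h0; simp at h0
  | @upMulL e₁ e₂ l E₁' _ ih =>
      intro h0
      exact le_trans (ih h0) (le_max_left e₁.height e₂.height)
  | upMulR _ _ _ => intro h0; simp at h0
  | @upStarP e a n E' _ _ _ => intro _; exact le_refl _
  | upStarN _ _ _ => intro h0; simp at h0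
  | prL _ ih => exact ih
  | prR _ _ _ => intro h0; simp at h0
  | stL _ ih => exact ih
  | stOne _ => intro h0; simp at h0

theorem maxLev_reach : ∀ (f : StExp A) (F : SExp A), Reach (SExp.up f) F →
    maxLev F ≤ f.height := by
  intro f
  induction f with
  | zero => intro F hF; rw [reach_up_zero F hF]; exact le_refl _
  | one => intro F hF; rw [reach_up_one F hF]; exact le_refl _
  | act a => intro F hF; rcases reach_up_act F hF with rfl | rfl <;> exact le_refl _
  | add f₁ f₂ ih₁ ih₂ =>
      intro F hF
      rcases reach_up_add F hF with rfl | h | h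
      · exact le_refl _
      · exact le_trans (ih₁ F h) (le_max_left _ _)
      · exact le_trans (ih₂ F h) (le_max_right _ _)
  | mul f₁ f₂ ih₁ ih₂ =>
      intro F hF
      rcases reach_up_mul F hF with rfl | ⟨G, hG, rfl⟩ | h
      · exact le_refl _
      · exact le_trans (ih₁ G hG) (le_max_left _ _)
      · exact le_trans (ih₂ F h) (le_max_right _ _)
  | star f₀ ih =>
      intro F hF
      rcases reach_up_star F hF with rfl | ⟨G, hG, rfl⟩
      · exact le_refl _
      · show maxLev G ≤ f₀.height + 1
        exact le_trans (ih G hG) (Nat.le_succ _)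

end LLEEAux
namespace LLEEAux

variable {A : Type u}

theorem normed_of_step {E E' : SExp A} {l : Option A} (h : SExp.SStep E l E')
    (hn : SExp.Normed E') : SExp.Normed E := by
  obtain ⟨F, hF, hT⟩ := hn
  exact ⟨F, Relation.ReflTransGen.head ⟨l, h⟩ hF, hT⟩

private theorem ostep_istep {X Y Z : SExp A} {a : A} (h : SExp.OneStep X Y)
    (h2 : SExp.IStep Y a Z) : SExp.IStep X a Z := by
  obtain ⟨W, r, s⟩ := h2
  exact ⟨W, Relation.ReflTransGen.head h r, s⟩

/-- From a normed state, either induced termination or a nonempty sequence of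
induced steps to induced termination. -/
theorem norm_chain {X : SExp A} (hn : SExp.Normed X) :
    SExp.ITerm X ∨ ∃ F, Relation.TransGen (fun X Y => ∃ a : A, SExp.IStep X a Y) X F ∧
      SExp.ITerm F := by
  obtain ⟨T, hreach, hT⟩ := hn
  induction hreach using Relation.ReflTransGen.head_induction_on with
  | refl => exact Or.inl ⟨T, .refl, hT⟩
  | head h' _ ih =>
    obtain ⟨l, hstep⟩ := h'
    cases l with
    | none =>
      rcases ih with ⟨F, r, t⟩ | ⟨F, tg, it⟩
      · exact Or.inl ⟨F, Relation.ReflTransGen.head hstep r, t⟩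
      · obtain ⟨b, ⟨a, hab⟩, rtg⟩ := Relation.TransGen.head'_iff.mp tg
        exact Or.inr ⟨F, Relation.TransGen.head' ⟨a, ostep_istep hstep hab⟩ rtg, it⟩
    | some a =>
      rcases ih with hit | ⟨F, tg, it⟩
      · exact Or.inr ⟨_, Relation.TransGen.single ⟨a, _, .refl, hstep⟩, hit⟩
      · exact Or.inr ⟨F, Relation.TransGen.head ⟨a, _, .refl, hstep⟩ tg, it⟩

theorem normedP_of_target {f : StExp A} {a : A} {E' : SExp A}
    (h : SExp.SStep (SExp.up f) (some a) E') (hn : SExp.Normed E') :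
    SExp.NormedP (SExp.up f) := by
  rcases norm_chain hn with hit | ⟨F, tg, it⟩
  · exact ⟨E', Relation.TransGen.single ⟨a, _, .refl, h⟩, hit⟩
  · exact ⟨F, Relation.TransGen.head ⟨a, _, .refl, h⟩ tg, it⟩

/-- Accessibility w.r.t. body steps (no infinite body path from `E`). -/
abbrev AccB (E : SExp A) : Prop := Acc (fun Y X : SExp A => Bo X Y) E

theorem acc_pr {G : SExp A} {g : StExp A} (hG : AccB G)
    (hg : ∀ H, (∃ l, SExp.MStep (SExp.up g) l H) → AccB H) : AccB (SExp.pr G g) := by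
  induction hG with
  | intro G hpred ih =>
    constructor
    rintro Y ⟨l, hY⟩
    cases hY with
    | prL h => exact ih _ ⟨_, h⟩
    | prR ht h => exact hg _ ⟨_, h⟩

theorem acc_st_nonormed {g : StExp A} : ∀ {F : SExp A}, AccB F → ¬ SExp.Normed F →
    AccB (SExp.st F g) := by
  intro F hF
  induction hF with
  | intro F hpred ih =>
    intro hnn
    constructor
    rintro Y ⟨l, hY⟩
    cases hY with
    | stL h => exact ih _ ⟨_, h⟩ (fun hn => hnn (normed_of_step (msound h) hn))
    | stOne ht => exact absurd ⟨F, .refl, ht⟩ hnn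

theorem acc_st_any {g : StExp A} (hstar : AccB (SExp.up (StExp.star g))) :
    ∀ {F : SExp A}, AccB F → AccB (SExp.st F g) := by
  intro F hF
  induction hF with
  | intro F hpred ih =>
    constructor
    rintro Y ⟨l, hY⟩
    cases hY with
    | stL h => exact ih _ ⟨_, h⟩
    | stOne ht => exact hstar

theorem acc_up : ∀ (f : StExp A) (F : SExp A), Reach (SExp.up f) F → AccB F := by
  intro f
  induction f with
  | zero =>
    intro F hF
    rw [reach_up_zero F hF]
    constructor; rintro Y ⟨l, h⟩; cases h
  | one =>
    intro F hF
    rw [reach_up_one F hF]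
    constructor; rintro Y ⟨l, h⟩; cases h
  | act a =>
    have h1 : AccB (SExp.up (StExp.one : StExp A)) := by
      constructor; rintro Y ⟨l, h⟩; cases h
    intro F hF
    rcases reach_up_act F hF with rfl | rfl
    · constructor; rintro Y ⟨l, h⟩; cases h; exact h1
    · exact h1
  | add f₁ f₂ ih₁ ih₂ =>
    intro F hF
    rcases reach_up_add F hF with rfl | h | h
    · constructor
      rintro Y ⟨l, h⟩
      cases h with
      | addL h => exact ih₁ Y (Relation.ReflTransGen.single ⟨_, msound h⟩)
      | addR h => exact ih₂ Y (Relation.ReflTransGen.single ⟨_, msound h⟩)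
    · exact ih₁ F h
    · exact ih₂ F h
  | mul f₁ f₂ ih₁ ih₂ =>
    have hg : ∀ H, (∃ l, SExp.MStep (SExp.up f₂) l H) → AccB H := by
      rintro H ⟨l, hH⟩
      exact ih₂ H (Relation.ReflTransGen.single ⟨_, msound hH⟩)
    intro F hF
    rcases reach_up_mul F hF with rfl | ⟨G, hG, rfl⟩ | h
    · constructor
      rintro Y ⟨l, h⟩
      cases h with
      | upMulL h =>
        exact acc_pr (ih₁ _ (Relation.ReflTransGen.single ⟨_, msound h⟩)) hg
      | upMulR ht h => exact hg _ ⟨_, h⟩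
    · exact acc_pr (ih₁ G hG) hg
    · exact ih₂ F h
  | star f₀ ih =>
    have hstar : AccB (SExp.up (StExp.star f₀)) := by
      constructor
      rintro Y ⟨l, hY⟩
      cases hY with
      | upStarN hnp h =>
        exact acc_st_nonormed (ih _ (Relation.ReflTransGen.single ⟨_, msound h⟩))
          (fun hn => hnp (normedP_of_target (msound h) hn))
    intro F hF
    rcases reach_up_star F hF with rfl | ⟨G, hG, rfl⟩
    · exact hstar
    · exact acc_st_any hstar (ih G hG)

/-- `flatUp f` and `up f` have the same marked transitions. -/
theorem mflat_step : ∀ (f : StExp A) (l : Option A × ℕ) (E' : SExp A),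
    SExp.MStep (SExp.flatUp f) l E' ↔ SExp.MStep (SExp.up f) l E' := by
  intro f
  induction f with
  | mul f₁ f₂ ih₁ ih₂ =>
    intro l E'
    show SExp.MStep (SExp.pr (SExp.flatUp f₁) f₂) l E' ↔ _
    constructor
    · intro h
      cases h with
      | prL h => exact .upMulL ((ih₁ _ _).1 h)
      | prR ht h => exact .upMulR ((flat_term f₁).1 ht) h
    · intro h
      cases h with
      | upMulL h => exact .prL ((ih₁ _ _).2 h)
      | upMulR ht h => exact .prR ((flat_term f₁).2 ht) h
  | zero => intro l E'; exact Iff.rfl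
  | one => intro l E'; exact Iff.rfl
  | act a => intro l E'; exact Iff.rfl
  | add f₁ f₂ _ _ => intro l E'; exact Iff.rfl
  | star f _ => intro l E'; exact Iff.rfl

theorem acc_reach_flat (e : StExp A) : ∀ F, Relation.ReflTransGen SExp.AStep (SExp.flatUp e) F →
    AccB F := by
  intro F hF
  rcases Relation.ReflTransGen.cases_head hF with rfl | ⟨c, ⟨l, hc⟩, hr⟩
  · have h := acc_up e _ Relation.ReflTransGen.refl
    constructor
    rintro Y ⟨l, hY⟩
    exact h.inv ⟨l, (mflat_step e _ _).1 hY⟩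
  · exact acc_up e F (Relation.ReflTransGen.head ⟨l, (flat_step e _ _).1 hc⟩ hr)

/-- No infinite chain lemma. -/
theorem no_inf_of_acc {α : Type*} {r : α → α → Prop} :
    ∀ {x : α}, Acc (fun y x => r x y) x → ∀ p : ℕ → α, p 0 = x → ¬ ∀ i, r (p i) (p (i + 1)) := by
  intro x hx
  induction hx with
  | intro x hpred ih =>
    intro p hp0 hstep
    exact ih (p 1) (hp0 ▸ hstep 0) (fun i => p (i + 1)) rfl (fun i => hstep (i + 1))

end LLEEAux
namespace LLEEAux

variable {A : Type u}

theorem nosterm_fill : ∀ (C : AppCtx A) (F : SExp A) (g : StExp A),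
    ¬ SExp.STerm (AppCtx.fill C (SExp.st F g)) := by
  intro C
  induction C with
  | hole => intro F g h; cases h
  | pr C' e ih => intro F g h; cases h with | pr h1 h2 => exact ih F g h1
  | st C' e ih => intro F g h; cases h

theorem fill_inj : ∀ (C : AppCtx A) {X Y : SExp A}, AppCtx.fill C X = AppCtx.fill C Y →
    X = Y := by
  intro C
  induction C with
  | hole => intro X Y h; exact h
  | pr C' e ih => intro X Y h; injection h with h1 _; exact ih h1
  | st C' e ih => intro X Y h; injection h with h1 _; exact ih h1

theorem fill_up_inj : ∀ (C C' : AppCtx A) (g g' : StExp A),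
    AppCtx.fill C (SExp.up g) = AppCtx.fill C' (SExp.up g') → C = C' ∧ g = g' := by
  intro C
  induction C with
  | hole =>
    intro C' g g' h
    cases C' with
    | hole => injection h with h1; exact ⟨rfl, h1⟩
    | pr C'' e => exact absurd h (by simp [AppCtx.fill])
    | st C'' e => exact absurd h (by simp [AppCtx.fill])
  | pr C₁ e ih =>
    intro C' g g' h
    cases C' with
    | hole => exact absurd h (by simp [AppCtx.fill])
    | pr C'' e' =>
      injection h with h1 h2
      obtain ⟨rfl, rfl⟩ := ih C'' g g' h1
      exact ⟨by rw [h2], rfl⟩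
    | st C'' e' => exact absurd h (by simp [AppCtx.fill])
  | st C₁ e ih =>
    intro C' g g' h
    cases C' with
    | hole => exact absurd h (by simp [AppCtx.fill])
    | pr C'' e' => exact absurd h (by simp [AppCtx.fill])
    | st C'' e' =>
      injection h with h1 h2
      obtain ⟨rfl, rfl⟩ := ih C'' g g' h1
      exact ⟨by rw [h2], rfl⟩

theorem maxLev_fill : ∀ (C : AppCtx A) (X : SExp A), maxLev (AppCtx.fill C X) = maxLev X := by
  intro C X
  induction C with
  | hole => rfl
  | pr C' e ih => exact ih
  | st C' e ih => exact ih

theorem mlift : ∀ (C : AppCtx A) {X Y : SExp A} {l : Option A × ℕ}, SExp.MStep X l Y →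
    SExp.MStep (AppCtx.fill C X) l (AppCtx.fill C Y) := by
  intro C
  induction C with
  | hole => intro X Y l h; exact h
  | pr C' e ih => intro X Y l h; exact .prL (ih h)
  | st C' e ih => intro X Y l h; exact .stL (ih h)

theorem fill_step : ∀ (C : AppCtx A) {F : SExp A} {g : StExp A} {l : Option A × ℕ} {Y : SExp A},
    SExp.MStep (AppCtx.fill C (SExp.st F g)) l Y →
    (∃ F', SExp.MStep F l F' ∧ Y = AppCtx.fill C (SExp.st F' g)) ∨
      (SExp.STerm F ∧ l = (none, 0) ∧ Y = AppCtx.fill C (SExp.up (StExp.star g))) := by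
  intro C
  induction C with
  | hole =>
    intro F g l Y h
    cases h with
    | stL h => exact Or.inl ⟨_, h, rfl⟩
    | stOne ht => exact Or.inr ⟨ht, rfl, rfl⟩
  | pr C' e ih =>
    intro F g l Y h
    cases h with
    | prL h =>
      rcases ih h with ⟨F', h1, rfl⟩ | ⟨h1, h2, rfl⟩
      · exact Or.inl ⟨F', h1, rfl⟩
      · exact Or.inr ⟨h1, h2, rfl⟩
    | prR ht h => exact absurd ht (nosterm_fill C' F g)
  | st C' e ih =>
    intro F g l Y h
    cases h with
    | stL h =>
      rcases ih h with ⟨F', h1, rfl⟩ | ⟨h1, h2, rfl⟩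
      · exact Or.inl ⟨F', h1, rfl⟩
      · exact Or.inr ⟨h1, h2, rfl⟩
    | stOne ht => exact absurd ht (nosterm_fill C' F g)

theorem entry_shape : ∀ {E : SExp A} {l : Option A × ℕ} {E'}, SExp.MStep E l E' →
    SExp.Canonical E → 0 < l.2 →
    ∃ (C : AppCtx A) (f₀ : StExp A) (a : A) (X : SExp A),
      E = AppCtx.fill C (SExp.up (StExp.star f₀)) ∧ E' = AppCtx.fill C (SExp.st X f₀) ∧
      l.1 = some a ∧ l.2 = f₀.height + 1 ∧ SExp.NormedP (SExp.up f₀) ∧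
      SExp.SStep (SExp.up f₀) (some a) X := by
  intro E l E' h
  induction h with
  | act => intro _ h0; simp at h0
  | addL _ _ => intro _ h0; simp at h0
  | addR _ _ => intro _ h0; simp at h0
  | upMulL _ _ => intro hc _; exact absurd hc id
  | upMulR _ _ _ => intro _ h0; simp at h0
  | @upStarP e a n X hN hstep _ =>
    intro _ _
    exact ⟨.hole, e, a, X, rfl, rfl, rfl, rfl, hN, msound hstep⟩
  | upStarN _ _ _ => intro _ h0; simp at h0
  | @prL E₁ E₁' e₂ l hstep ih =>
    intro hc h0
    obtain ⟨C, f₀, a, X, rfl, rfl, h1, h2, h3, h4⟩ := ih hc h0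
    exact ⟨.pr C e₂, f₀, a, X, rfl, rfl, h1, h2, h3, h4⟩
  | prR _ _ _ => intro _ h0; simp at h0
  | @stL E₁ E₁' e₂ l hstep ih =>
    intro hc h0
    obtain ⟨C, f₀, a, X, rfl, rfl, h1, h2, h3, h4⟩ := ih hc h0
    exact ⟨.st C e₂, f₀, a, X, rfl, rfl, h1, h2, h3, h4⟩
  | stOne _ => intro _ h0; simp at h0

end LLEEAux
namespace LLEEAux

variable {A : Type u}

inductive PathN : SExp A → ℕ → SExp A → Prop
  | refl (E : SExp A) : PathN E 0 E
  | head {E F G : SExp A} {n : ℕ} : SExp.AStep E F → PathN F n G → PathN E (n + 1) G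

theorem pathN_snoc : ∀ {E : SExp A} {n} {F G : SExp A}, PathN E n F → SExp.AStep F G →
    PathN E (n + 1) G := by
  intro E n F G h
  induction h with
  | refl E => exact fun hs => .head hs (.refl _)
  | head hs _ ih => exact fun h2 => .head hs (ih h2)

theorem pathN_of_rtg {E F : SExp A} (h : Relation.ReflTransGen SExp.AStep E F) :
    ∃ n, PathN E n F := by
  induction h with
  | refl => exact ⟨0, .refl E⟩
  | tail _ hstep ih => obtain ⟨n, hn⟩ := ih; exact ⟨n + 1, pathN_snoc hn hstep⟩

theorem st_pop : ∀ (n : ℕ) (C : AppCtx A) (F : SExp A) (g : StExp A) (T : SExp A),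
    PathN (AppCtx.fill C (SExp.st F g)) n T → SExp.STerm T →
    ∃ j, j < n ∧ PathN (AppCtx.fill C (SExp.up (StExp.star g))) j T := by
  intro n
  induction n with
  | zero =>
    intro C F g T hp hT
    cases hp
    exact absurd hT (nosterm_fill C F g)
  | succ n ih =>
    intro C F g T hp hT
    cases hp with
    | head hs rest =>
      obtain ⟨l, hstep⟩ := hs
      obtain ⟨m, ms⟩ := mcomplete hstep
      rcases fill_step C ms with ⟨F', _, rfl⟩ | ⟨_, _, rfl⟩
      · obtain ⟨j, hj, pj⟩ := ih C F' g T rest hT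
        exact ⟨j, by omega, pj⟩
      · exact ⟨n, by omega, rest⟩

theorem body_norm : ∀ (n : ℕ) (X T : SExp A), PathN X n T → SExp.STerm T →
    SExp.Canonical X →
    ∃ T', Relation.ReflTransGen Bo X T' ∧ SExp.STerm T' := by
  intro n
  induction n using Nat.strong_induction_on with
  | _ n ih =>
    intro X T hp hT hc
    cases hp with
    | refl => exact ⟨X, .refl, hT⟩
    | @head _ F _ m hs rest =>
      obtain ⟨l, hstep⟩ := hs
      obtain ⟨k, ms⟩ := mcomplete hstep
      match k, ms with
      | 0, ms =>
        obtain ⟨T', rtg, t⟩ := ih m (by omega) F T rest hT (canonical_step hstep hc)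
        exact ⟨T', Relation.ReflTransGen.head ⟨l, ms⟩ rtg, t⟩
      | (k + 1), ms =>
        obtain ⟨C, f₀, a, Xx, hE, hE', _, _, _, _⟩ := entry_shape ms hc (by simp)
        subst hE hE'
        obtain ⟨j, hj, pj⟩ := st_pop m C Xx f₀ T rest hT
        exact ih j (by omega) _ T pj hT hc

end LLEEAux
namespace LLEEAux

variable {A : Type u}

theorem sreach_canon {e : StExp A} {x : SExp A} (hx : x ∈ SReach e) : SExp.Canonical x := by
  have hx' : Relation.ReflTransGen SExp.AStep (SExp.flatUp e) x := hx
  clear hx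
  induction hx' with
  | refl => exact canonical_flatUp e
  | tail _ hstep ih => obtain ⟨l, hl⟩ := hstep; exact canonical_step hl ih

theorem sreach_step {e : StExp A} {x y : SExp A} {l : Option A} (hx : x ∈ SReach e)
    (h : SExp.SStep x l y) : y ∈ SReach e :=
  Relation.ReflTransGen.tail hx ⟨l, h⟩

theorem one_sub_astep {X Y : SExp A} (h : Relation.ReflTransGen SExp.OneStep X Y) :
    Relation.ReflTransGen SExp.AStep X Y :=
  Relation.ReflTransGen.mono (fun _ _ h => ⟨none, h⟩) X Y h

theorem istep_astep {X Y : SExp A} {a : A} (h : SExp.IStep X a Y) :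
    Relation.ReflTransGen SExp.AStep X Y := by
  obtain ⟨Z, r, s⟩ := h
  exact (one_sub_astep r).tail ⟨some a, s⟩

theorem isteps_astep {X Y : SExp A}
    (h : Relation.ReflTransGen (fun X Y => ∃ a : A, SExp.IStep X a Y) X Y) :
    Relation.ReflTransGen SExp.AStep X Y := by
  induction h with
  | refl => exact .refl
  | tail _ hstep ih => exact ih.trans (istep_astep hstep.choose_spec)

theorem rtg_fun {α : Type*} {r : α → α → Prop} {a b : α} (h : Relation.ReflTransGen r a b) :
    ∃ (k : ℕ) (c : ℕ → α), c 0 = a ∧ c k = b ∧ ∀ i < k, r (c i) (c (i + 1)) := by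
  induction h with
  | refl => exact ⟨0, fun _ => a, rfl, rfl, by omega⟩
  | @tail b' c' _ hbc ih =>
    obtain ⟨k, c, h0, hk, hs⟩ := ih
    refine ⟨k + 1, fun i => if i ≤ k then c i else c', ?_, ?_, ?_⟩
    · simp [h0]
    · simp
    · intro i hi
      by_cases hik : i < k
      · have h1 : i ≤ k := by omega
        have h2 : i + 1 ≤ k := by omega
        simpa [h1, h2] using hs i hik
      · have h1 : i = k := by omega
        subst h1
        have h2 : ¬ (i + 1 ≤ i) := by omega
        simpa [h2, hk] using hbc

theorem cyc_inf {V : Type*} {L : Type*} (SC : Chart V L) (K : ℕ) (c : ℕ → V)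
    (h0 : c 0 = SC.start) (hK : c K = SC.start) (hpos : 0 < K)
    (hs : ∀ i < K, ∃ l, SC.step (c i) l (c (i + 1))) : ∃ p, IsInfPathFrom SC p := by
  refine ⟨fun i => c (i % K), by simpa using h0, fun i => ?_⟩
  have hi : i % K < K := Nat.mod_lt _ hpos
  obtain ⟨l, hl⟩ := hs _ hi
  refine ⟨l, ?_⟩
  have e1 : (i + 1) % K = (i % K + 1) % K := by
    conv_lhs => rw [← Nat.mod_add_div i K]
    rw [Nat.add_right_comm]
    rw [Nat.add_mul_mod_self_left]
  have key : c ((i + 1) % K) = c (i % K + 1) := by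
    by_cases h : i % K + 1 < K
    · rw [e1, Nat.mod_eq_of_lt h]
    · have h2 : i % K + 1 = K := by omega
      rw [e1, h2, Nat.mod_self, h0, ← hK]
  show SC.step (c (i % K)) l (c ((i + 1) % K))
  rw [key]
  exact hl

theorem loop_shape (e : StExp A) (v : SExp A) (n : ℕ) (C : AppCtx A) (f₀ : StExp A)
    (hvEq : v = AppCtx.fill C (SExp.up (StExp.star f₀))) (hn : 0 < n) :
    ∀ t ∈ LLEE.loopVerts (markedOneChartInt e).step v n,
      t = v ∨ ∃ F, Reach (SExp.up f₀) F ∧ t = AppCtx.fill C (SExp.st F f₀) := by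
  rintro t (rfl | ⟨u, ⟨lu, hvm, hms⟩, hrtg⟩)
  · exact Or.inl rfl
  · obtain ⟨C', f₀', a', X', hvEq', huEq', _, _, _, hstep'⟩ :=
      entry_shape hms (sreach_canon hvm) hn
    obtain ⟨rfl, hstareq⟩ := fill_up_inj C C' _ _ (hvEq ▸ hvEq')
    injection hstareq with hf₀
    subst hf₀
    subst huEq'
    clear hms
    induction hrtg with
    | refl => exact Or.inr ⟨X', Relation.ReflTransGen.single ⟨_, hstep'⟩, rfl⟩
    | @tail b c' hab hbc ih =>
      obtain ⟨⟨lb, hbm, hbms⟩, hbne⟩ := hbc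
      rcases ih with rfl | ⟨F, hF, rfl⟩
      · exact absurd rfl hbne
      · rcases fill_step C hbms with ⟨F', hF', rfl⟩ | ⟨_, _, rfl⟩
        · exact Or.inr ⟨F', hF.tail ⟨_, msound hF'⟩, rfl⟩
        · exact Or.inl hvEq.symm

end LLEEAux
namespace LLEEAux
theorem rtg_fun_pos {α : Type*} {r : α → α → Prop} {a b c : α} (h1 : r a b)
    (h2 : Relation.ReflTransGen r b c) :
    ∃ (k : ℕ) (f : ℕ → α), 0 < k ∧ f 0 = a ∧ f k = c ∧ ∀ i < k, r (f i) (f (i + 1)) := by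
  obtain ⟨k, f, h0, hk, hs⟩ := rtg_fun h2
  refine ⟨k + 1, fun i => if i = 0 then a else f (i - 1), by omega, by simp, ?_, ?_⟩
  · have hne : ¬ (k + 1 = 0) := by omega
    simp only [hne, if_false]
    simpa using hk
  · intro i hi
    rcases Nat.eq_zero_or_pos i with rfl | hip
    · simp only [if_pos rfl, Nat.one_ne_zero, if_false]
      simpa [h0] using h1
    · have hne : ¬ (i = 0) := by omega
      have hne2 : ¬ (i + 1 = 0) := by omega
      simp only [hne, hne2, if_false]
      have h5 : i + 1 - 1 = i - 1 + 1 := by omega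
      rw [h5]
      exact hs (i - 1) (by omega)
end LLEEAux

open LLEEAux

/-- For every star expression `e`, the entry/body-labeling
`Ĉ1(e)` is a LLEE-witness of the 1-chart interpretation `C1(e)`. -/
theorem marked_onechart_is_LLEE_witness {A : Type u} (e : StExp A) :
    (∀ (x : SExp A) (l : Option A) (y : SExp A),
      (oneChartInt e).step x l y ↔ ∃ n : ℕ, (markedOneChartInt e).step x (l, n) y) ∧
    LLEE.IsWitness (markedOneChartInt e).step (markedOneChartInt e).term := by
  have hW1 : ¬ ∃ p : ℕ → SExp A, ∀ i, LLEE.Body (markedOneChartInt e).step (p i) (p (i + 1)) := by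
    rintro ⟨p, hp⟩
    obtain ⟨l0, h0m, -⟩ := hp 0
    exact no_inf_of_acc (r := Bo) (acc_reach_flat e _ h0m) p rfl
      (fun i => by obtain ⟨l, hm, hms⟩ := hp i; exact ⟨l, hms⟩)
  constructor
  · intro x l y
    constructor
    · rintro ⟨hx, hs⟩
      obtain ⟨n, hn⟩ := mcomplete hs
      exact ⟨n, hx, hn⟩
    · rintro ⟨n, hx, hn⟩
      exact ⟨hx, msound hn⟩
  refine ⟨hW1, ?_, ?_⟩
  · -- (W2)
    rintro v n hn ⟨w₀, lw₀, hvm, hms₀⟩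
    obtain ⟨C, f₀, a₀, X₀, hvEq, hwEq, -, hnEq', hNP, -⟩ :=
      entry_shape hms₀ (sreach_canon hvm) hn
    have hnEq : n = f₀.height + 1 := hnEq'
    have hne : ∀ F : SExp A, AppCtx.fill C (SExp.st F f₀) ≠ v := by
      intro F h
      rw [hvEq] at h
      cases fill_inj C h
    refine ⟨?_, ?_, ?_⟩
    · -- (L1): an infinite path from the start vertex exists
      obtain ⟨F, tg, it⟩ := id hNP
      obtain ⟨Y1, ⟨a, hIS⟩, rtg⟩ := Relation.TransGen.head'_iff.mp tg
      obtain ⟨Z, r1, s1⟩ := hIS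
      have hZ : SExp.up f₀ = Z := by
        rcases Relation.ReflTransGen.cases_head r1 with h | ⟨c, hc, -⟩
        · exact h
        · exact absurd rfl (no_none_up hc ⟨_, rfl⟩)
      subst hZ
      have hNormY : SExp.Normed Y1 := by
        obtain ⟨T, rT, tT⟩ := it
        exact ⟨T, (isteps_astep (Relation.ReflTransGen.mono (fun _ _ h => h) _ _ rtg)).trans (one_sub_astep rT), tT⟩
      obtain ⟨T, hreach, hT⟩ := hNormY
      obtain ⟨nn, pn⟩ := pathN_of_rtg hreach
      obtain ⟨T', bor, hT'⟩ := body_norm nn Y1 T pn hT (canonical_target_up s1 ⟨_, rfl⟩)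
      obtain ⟨m1, ms1⟩ := mcomplete s1
      have hstepv : SExp.MStep v (some a, n) (AppCtx.fill C (SExp.st Y1 f₀)) := by
        rw [hvEq, hnEq]
        exact mlift C (.upStarP hNP ms1)
      have hEntry : LLEE.Entry (markedOneChartInt e).step n v (AppCtx.fill C (SExp.st Y1 f₀)) :=
        ⟨some a, hvm, hstepv⟩
      have hu₁lv : AppCtx.fill C (SExp.st Y1 f₀) ∈
          LLEE.loopVerts (markedOneChartInt e).step v n :=
        Set.mem_insert_iff.mpr (Or.inr ⟨_, hEntry, .refl⟩)
      have hu₁r : AppCtx.fill C (SExp.st Y1 f₀) ∈ SReach e := sreach_step hvm (msound hstepv)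
      have hchain : ∀ T'', Relation.ReflTransGen Bo Y1 T'' →
          Relation.ReflTransGen
            (fun x y => ∃ l, (LLEE.subchartAt (markedOneChartInt e).step
              (markedOneChartInt e).term v n).step x l y)
            (AppCtx.fill C (SExp.st Y1 f₀)) (AppCtx.fill C (SExp.st T'' f₀)) ∧
          AppCtx.fill C (SExp.st T'' f₀) ∈ LLEE.loopVerts (markedOneChartInt e).step v n ∧
          AppCtx.fill C (SExp.st T'' f₀) ∈ SReach e := by
        intro T'' h
        induction h with
        | refl => exact ⟨.refl, hu₁lv, hu₁r⟩
        | @tail Fb Fc _ hbc ih =>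
          obtain ⟨ih1, ih2, ih3⟩ := ih
          obtain ⟨lb, hbms⟩ := hbc
          have hstep2 : SExp.MStep (AppCtx.fill C (SExp.st Fb f₀)) (lb, 0)
              (AppCtx.fill C (SExp.st Fc f₀)) := mlift C (SExp.MStep.stL hbms)
          have hbody : LLEE.Body (markedOneChartInt e).step (AppCtx.fill C (SExp.st Fb f₀))
              (AppCtx.fill C (SExp.st Fc f₀)) := ⟨lb, ih3, hstep2⟩
          have hlv : AppCtx.fill C (SExp.st Fc f₀) ∈
              LLEE.loopVerts (markedOneChartInt e).step v n := by
            rcases Set.mem_insert_iff.mp ih2 with h | ⟨u', he', hr'⟩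
            · exact absurd h (hne Fb)
            · exact Set.mem_insert_iff.mpr (Or.inr ⟨u', he', hr'.tail ⟨hbody, hne Fb⟩⟩)
          exact ⟨ih1.tail ⟨(lb, 0), Or.inr ⟨ih2, hne Fb, rfl, ih3, hstep2⟩⟩, hlv,
            sreach_step ih3 (msound hstep2)⟩
      obtain ⟨hcRS, hclv, hcr⟩ := hchain T' bor
      obtain ⟨k, cmid, hc0, hck, hcs⟩ := rtg_fun hcRS
      have hpop : (LLEE.subchartAt (markedOneChartInt e).step
          (markedOneChartInt e).term v n).step (AppCtx.fill C (SExp.st T' f₀)) (none, 0) v :=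
        Or.inr ⟨hclv, hne T', rfl, hcr, by rw [hvEq]; exact mlift C (.stOne hT')⟩
      have hent : (LLEE.subchartAt (markedOneChartInt e).step
          (markedOneChartInt e).term v n).step v (some a, n)
          (AppCtx.fill C (SExp.st Y1 f₀)) := Or.inl ⟨rfl, rfl, hvm, hstepv⟩
      have hfull := hcRS.tail ⟨((none : Option A), 0), hpop⟩
      obtain ⟨K, f, hKpos, hf0, hfK, hfs⟩ := rtg_fun_pos ⟨((some a : Option A), n), hent⟩ hfull
      exact cyc_inf _ K f hf0 hfK hKpos hfs
    · -- (L2): every infinite path returns to the start vertex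
      rintro p ⟨hp0, hps⟩
      by_contra hcon
      push_neg at hcon
      refine hW1 ⟨fun i => p (i + 1), fun i => ?_⟩
      obtain ⟨l, hstep⟩ := hps (i + 1)
      obtain ⟨l1, l2⟩ := l
      rcases hstep with ⟨hxv, -, -⟩ | ⟨-, -, hl2, hs⟩
      · exact absurd hxv (hcon (i + 1) (by omega))
      · have hl2' : l2 = 0 := hl2
        subst hl2'
        exact ⟨l1, hs⟩
    · -- (L3): only the start vertex may terminate
      rintro w hw ⟨hwlv, hwr, hwT⟩
      rcases loop_shape e v n C f₀ hvEq hn w hwlv with rfl | ⟨F, -, rfl⟩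
      · rfl
      · exact absurd hwT (nosterm_fill C F f₀)
  · -- (W3)
    rintro v n hn ⟨w₀, lw₀, hvm, hms₀⟩ t ht htne m t' hm ⟨lt', htm, htms⟩
    obtain ⟨C, f₀, a₀, X₀, hvEq, -, -, hnEq', -, -⟩ :=
      entry_shape hms₀ (sreach_canon hvm) hn
    have hnEq : n = f₀.height + 1 := hnEq'
    rcases loop_shape e v n C f₀ hvEq hn t ht with rfl | ⟨F, hF, rfl⟩
    · exact absurd rfl htne
    · have h1 : m ≤ maxLev F := by
        have h1' : m ≤ maxLev (AppCtx.fill C (SExp.st F f₀)) := entry_le_maxLev htms hm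
        rwa [maxLev_fill] at h1'
      have h2 : maxLev F ≤ f₀.height := maxLev_reach f₀ F hF
      omega
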